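/- For a maximal chain C in Π_n, the total number of extreme rays of the UPGMA cone P(C) given by Theorem (traversal characterization) is sum over s from 2 to n of prod_{i=1}^{s} |λ_i^s|^{s-1} (plus no unit vectors since π_t = 1-block), and for the chain corresponding to the balanced merging this quantity grows exponentially in n; in particular it is at least 2^{n-2} for n ≥ 2 for any maximal chain containing a partition with a part of size ≥ 2 at each level. -/

import Mathlib

/-- For a maximal chain `C` in `Π_n` (recorded by the part sizes `lam s i = |λ_i^s|` of
the partition `π_s` with `s` parts, for `2 ≤ s ≤ n`), the total number of extreme rays of
the UPGMA cone `P(C)` is `∑_{s=2}^{n} ∏_{i=1}^{s} |λ_i^s|^{s-1}`; for any chain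
containing, at each level `2 ≤ s < n`, a partition with a part of size at least `2`,
this quantity is at least `2^{n-2}` (for `n ≥ 2`), hence grows exponentially in `n`. -/
theorem stmt16 (n : ℕ) (hn : 2 ≤ n)
    (lam : (s : ℕ) → Fin s → ℕ)
    (hpos : ∀ s, 2 ≤ s → s ≤ n → ∀ i, 0 < lam s i)
    (hsum : ∀ s, 2 ≤ s → s ≤ n → ∑ i, lam s i = n)
    (hbig : ∀ s, 2 ≤ s → s < n → ∃ i, 2 ≤ lam s i) :
    2 ^ (n - 2) ≤ ∑ s ∈ Finset.Icc 2 n, ∏ i, lam s i ^ (s - 1) := by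
  rcases eq_or_lt_of_le hn with h2 | h3
  · -- n = 2 : the sum is at least 1 = 2^0
    subst h2
    have h1 : (1 : ℕ) ≤ ∏ i, lam 2 i ^ (2 - 1) := by
      apply Finset.one_le_prod'
      intro i _
      have := hpos 2 le_rfl le_rfl i
      exact Nat.one_le_pow _ _ this
    calc (2 : ℕ) ^ (2 - 2) = 1 := by norm_num
      _ ≤ ∏ i, lam 2 i ^ (2 - 1) := h1
      _ ≤ ∑ s ∈ Finset.Icc 2 2, ∏ i, lam s i ^ (s - 1) := by
          apply Finset.single_le_sum (f := fun s => ∏ i, lam s i ^ (s - 1))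
          · intro s _; exact Nat.zero_le _
          · simp
  · -- n ≥ 3 : use the level s = n - 1
    set s := n - 1 with hs
    have hs2 : 2 ≤ s := by omega
    have hsn : s ≤ n := by omega
    have hslt : s < n := by omega
    obtain ⟨i0, hi0⟩ := hbig s hs2 hslt
    have key : 2 ^ (n - 2) ≤ ∏ i, lam s i ^ (s - 1) := by
      calc (2 : ℕ) ^ (n - 2) = 2 ^ (s - 1) := by rw [show s - 1 = n - 2 from by omega]
        _ ≤ lam s i0 ^ (s - 1) := Nat.pow_le_pow_left hi0 _
        _ ≤ ∏ i, lam s i ^ (s - 1) := by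
            apply Finset.single_le_prod' (f := fun i => lam s i ^ (s - 1))
            · intro i _
              exact Nat.one_le_pow _ _ (hpos s hs2 hsn i)
            · exact Finset.mem_univ i0
    calc 2 ^ (n - 2) ≤ ∏ i, lam s i ^ (s - 1) := key
      _ ≤ ∑ t ∈ Finset.Icc 2 n, ∏ i, lam t i ^ (t - 1) := by
          apply Finset.single_le_sum (f := fun t => ∏ i, lam t i ^ (t - 1))
          · intro t _; exact Nat.zero_le _
          · simp [Finset.mem_Icc]; omega
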